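/- Entropy decomposition for a terminating finite-state Markov process: let M be the n×n substochastic transition matrix (row sums < 1) of a deterministic PFSA with local conditional distributions over next symbols and EOS at each state, let α be the initial distribution, and let ξ_i be the Shannon entropy of the local next-symbol-or-EOS distribution at state i. Then the entropy of the induced distribution over finite paths equals αᵀ (I − M)^{-1} ξ. -/

import Mathlib

/-- The probability that a deterministic PFSA with transition function `next`,
transition weights `w`, and halting weights `ρ` generates the string `y`
starting from state `q`. -/
noncomputable def strWeight {Q A : Type*} (next : Q → A → Q) (w : Q → A → ℝ)
    (ρ : Q → ℝ) : Q → List A → ℝ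
  | q, [] => ρ q
  | q, a :: rest => w q a * strWeight next w ρ (next q a) rest

noncomputable def sliceSum {n : ℕ} {A : Type*} [Fintype A]
    (f : Fin n → List A → ℝ) (k : ℕ) (q : Fin n) : ℝ :=
  ∑ v : Fin k → A, f q (List.ofFn v)

lemma sliceSum_zero {n : ℕ} {A : Type*} [Fintype A]
    (f : Fin n → List A → ℝ) (q : Fin n) : sliceSum f 0 q = f q [] := by
  simp [sliceSum]

lemma sliceSum_succ {n : ℕ} {A : Type*} [Fintype A]
    (f : Fin n → List A → ℝ) (k : ℕ) (q : Fin n) :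
    sliceSum f (k + 1) q = ∑ a : A, ∑ v : Fin k → A, f q (a :: List.ofFn v) := by
  rw [sliceSum, ← Equiv.sum_comp (Fin.consEquiv fun _ => A)
      (fun v => f q (List.ofFn v)), Fintype.sum_prod_type]
  simp [Fin.consEquiv, List.ofFn_succ]

theorem dpfsa_entropy_decomposition (n : ℕ) (A : Type*) [Fintype A]
    (next : Fin n → A → Fin n) (w : Fin n → A → ℝ) (ρ : Fin n → ℝ)
    (ε : ℝ) (hε : 0 < ε)
    (hw : ∀ i a, 0 ≤ w i a) (hρ : ∀ i, ε < ρ i)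
    (hnorm : ∀ i, ρ i + ∑ a, w i a = 1)
    (M : Matrix (Fin n) (Fin n) ℝ)
    (hM : ∀ i j, M i j = ∑ a, if next i a = j then w i a else 0)
    (ξ : Fin n → ℝ)
    (hξ : ∀ i, ξ i = -(∑ a, w i a * Real.log (w i a)) - ρ i * Real.log (ρ i))
    (α : Fin n → ℝ) (q0 : Fin n) (hα : α = Pi.single q0 1) :
    HasSum
      (fun p : Fin n × List A =>
        -((α p.1 * strWeight next w ρ p.1 p.2) *
            Real.log (α p.1 * strWeight next w ρ p.1 p.2)))
      (dotProduct (Matrix.vecMul α (1 - M)⁻¹) ξ) := by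
  classical
  -- basic facts
  set c : ℝ := 1 - ε with hc
  have hρpos : ∀ i, 0 < ρ i := fun i => lt_trans hε (hρ i)
  have hsw : ∀ i, ∑ a, w i a = 1 - ρ i := fun i => by linarith [hnorm i]
  have hswc : ∀ i, ∑ a, w i a ≤ c := fun i => by
    have := hρ i; rw [hsw i]; simp only [hc]; linarith
  have hswnn : ∀ i, (0:ℝ) ≤ ∑ a, w i a :=
    fun i => Finset.sum_nonneg fun a _ => hw i a
  have hρle1 : ∀ i, ρ i ≤ 1 := fun i => by linarith [hnorm i, hswnn i]
  have hc0 : 0 ≤ c := le_trans (hswnn q0) (hswc q0)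
  have hc1 : c < 1 := by simp only [hc]; linarith
  have hwle : ∀ i a, w i a ≤ c := fun i a =>
    le_trans (Finset.single_le_sum (fun a _ => hw i a) (Finset.mem_univ a)) (hswc i)
  have hwle1 : ∀ i a, w i a ≤ 1 := fun i a => le_trans (hwle i a) (le_of_lt hc1)
  set W : Fin n → List A → ℝ := strWeight next w ρ with hW
  have hWnil : ∀ q, W q [] = ρ q := fun q => rfl
  have hWcons : ∀ q a y, W q (a :: y) = w q a * W (next q a) y := fun q a y => rfl
  have hWnn : ∀ y q, 0 ≤ W q y := by
    intro y
    induction y with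
    | nil => intro q; rw [hWnil]; exact le_of_lt (hρpos q)
    | cons a y ih => intro q; rw [hWcons]; exact mul_nonneg (hw q a) (ih _)
  have hWle1 : ∀ y q, W q y ≤ 1 := by
    intro y
    induction y with
    | nil => intro q; rw [hWnil]; exact hρle1 q
    | cons a y ih =>
      intro q; rw [hWcons]
      calc w q a * W (next q a) y ≤ 1 * 1 :=
            mul_le_mul (hwle1 q a) (ih _) (hWnn _ _) zero_le_one
        _ = 1 := one_mul 1
  -- the entropy summand over strings
  set g : Fin n → List A → ℝ := fun q y => -(W q y * Real.log (W q y)) with hg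
  have hgnn : ∀ q y, 0 ≤ g q y := by
    intro q y
    rcases eq_or_lt_of_le (hWnn y q) with h | h
    · simp [hg, ← h]
    · have : Real.log (W q y) ≤ 0 := Real.log_nonpos (le_of_lt h) (hWle1 y q)
      have := mul_nonpos_of_nonneg_of_nonpos (le_of_lt h) this
      simp only [hg]; linarith
  have hgcons : ∀ q a y,
      g q (a :: y) = -(w q a * Real.log (w q a)) * W (next q a) y
        + w q a * g (next q a) y := by
    intro q a y
    simp only [hg, hWcons]
    rcases eq_or_ne (w q a) 0 with h | h
    · simp [h]
    rcases eq_or_ne (W (next q a) y) 0 with h2 | h2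
    · simp [h2]
    · rw [Real.log_mul h h2]; ring
  -- slice sums
  set Wk : ℕ → Fin n → ℝ := fun k => sliceSum W k with hWk
  set Gk : ℕ → Fin n → ℝ := fun k => sliceSum g k with hGk
  have hWk0 : ∀ q, Wk 0 q = ρ q := fun q => sliceSum_zero W q
  have hWks : ∀ k q, Wk (k+1) q = ∑ a, w q a * Wk k (next q a) := by
    intro k q
    simp only [hWk]
    rw [sliceSum_succ]
    refine Finset.sum_congr rfl fun a _ => ?_
    rw [sliceSum, Finset.mul_sum]
    exact Finset.sum_congr rfl fun v _ => hWcons q a (List.ofFn v)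
  have hGk0 : ∀ q, Gk 0 q = -(ρ q * Real.log (ρ q)) := by
    intro q; simp only [hGk]; rw [sliceSum_zero]; simp [hg, hWnil]
  have hGks : ∀ k q, Gk (k+1) q =
      ∑ a, (-(w q a * Real.log (w q a)) * Wk k (next q a)
        + w q a * Gk k (next q a)) := by
    intro k q
    simp only [hGk, hWk]
    rw [sliceSum_succ]
    refine Finset.sum_congr rfl fun a _ => ?_
    rw [sliceSum, sliceSum, Finset.mul_sum, Finset.mul_sum, ← Finset.sum_add_distrib]
    exact Finset.sum_congr rfl fun v _ => hgcons q a (List.ofFn v)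
  -- nonnegativity and bounds for slice sums
  have hWknn : ∀ k q, 0 ≤ Wk k q := fun k q =>
    Finset.sum_nonneg fun v _ => hWnn _ q
  have hGknn : ∀ k q, 0 ≤ Gk k q := fun k q =>
    Finset.sum_nonneg fun v _ => hgnn q _
  have hWkle : ∀ k q, Wk k q ≤ c ^ k := by
    intro k
    induction k with
    | zero => intro q; rw [hWk0]; simpa using hρle1 q
    | succ k ih =>
      intro q
      rw [hWks]
      calc ∑ a, w q a * Wk k (next q a) ≤ ∑ a, w q a * c ^ k :=
            Finset.sum_le_sum fun a _ =>
              mul_le_mul_of_nonneg_left (ih _) (hw q a)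
        _ = (∑ a, w q a) * c ^ k := by rw [Finset.sum_mul]
        _ ≤ c * c ^ k := mul_le_mul_of_nonneg_right (hswc q) (pow_nonneg hc0 k)
        _ = c ^ (k + 1) := by ring
  -- nonpositivity of x log x on [0,1]
  have hlw : ∀ i a, w i a * Real.log (w i a) ≤ 0 := by
    intro i a
    rcases eq_or_lt_of_le (hw i a) with h | h
    · simp [← h]
    · exact mul_nonpos_of_nonneg_of_nonpos (le_of_lt h)
        (Real.log_nonpos (le_of_lt h) (hwle1 i a))
  have hlρ : ∀ i, ρ i * Real.log (ρ i) ≤ 0 := fun i =>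
    mul_nonpos_of_nonneg_of_nonpos (le_of_lt (hρpos i))
      (Real.log_nonpos (le_of_lt (hρpos i)) (hρle1 i))
  have hslw : ∀ i, ∑ a, w i a * Real.log (w i a) ≤ 0 := fun i =>
    Finset.sum_nonpos fun a _ => hlw i a
  set C : ℝ := ∑ i, ξ i with hC
  have hξnn : ∀ i, 0 ≤ ξ i := by
    intro i; rw [hξ]; linarith [hslw i, hlρ i]
  have hξC : ∀ i, ξ i ≤ C :=
    fun i => Finset.single_le_sum (fun j _ => hξnn j) (Finset.mem_univ i)
  have hC0 : 0 ≤ C := Finset.sum_nonneg fun i _ => hξnn i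
  have hwln : ∀ q, ∑ a, -(w q a * Real.log (w q a)) ≤ C := by
    intro q
    have h1 : ∑ a, -(w q a * Real.log (w q a))
        = -(∑ a, w q a * Real.log (w q a)) := by
      rw [← Finset.sum_neg_distrib]
    rw [h1]
    have h2 := hξ q
    have h3 := hξC q
    have h4 := hlρ q
    linarith
  have hGk0le : ∀ q, Gk 0 q ≤ C := by
    intro q
    rw [hGk0]
    have h2 := hξ q
    have h3 := hξC q
    have h4 := hslw q
    linarith
  -- recursion-step bound
  have hstep : ∀ k (B D : ℝ), 0 ≤ B → 0 ≤ D → (∀ q', Wk k q' ≤ D) →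
      (∀ q', Gk k q' ≤ B) → ∀ q, Gk (k+1) q ≤ C * D + c * B := by
    intro k B D hB hD hWD hGB q
    rw [hGks]
    calc ∑ a, (-(w q a * Real.log (w q a)) * Wk k (next q a)
          + w q a * Gk k (next q a))
        ≤ ∑ a, (-(w q a * Real.log (w q a)) * D + w q a * B) :=
          Finset.sum_le_sum fun a _ => add_le_add
            (mul_le_mul_of_nonneg_left (hWD _) (by linarith [hlw q a]))
            (mul_le_mul_of_nonneg_left (hGB _) (hw q a))
      _ = (∑ a, -(w q a * Real.log (w q a))) * D + (∑ a, w q a) * B := by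
          rw [Finset.sum_add_distrib, Finset.sum_mul, Finset.sum_mul]
      _ ≤ C * D + c * B := add_le_add
          (mul_le_mul_of_nonneg_right (hwln q) hD)
          (mul_le_mul_of_nonneg_right (hswc q) hB)
  have hGkb : ∀ k q, Gk (k+1) q ≤ C * ((k : ℝ) + 2) * c ^ k := by
    intro k
    induction k with
    | zero =>
      intro q
      have h := hstep 0 C 1 hC0 zero_le_one
        (fun q' => by rw [hWk0]; exact hρle1 q') hGk0le q
      have hcC : c * C ≤ C := by nlinarith
      push_cast
      simp only [pow_zero, mul_one]
      linarith
    | succ k ih =>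
      intro q
      have hB : (0:ℝ) ≤ C * ((k : ℝ) + 2) * c ^ k := by positivity
      have h := hstep (k+1) (C * ((k : ℝ) + 2) * c ^ k) (c ^ (k+1)) hB
        (pow_nonneg hc0 _) (fun q' => hWkle (k+1) q') ih q
      have he : C * c ^ (k+1) + c * (C * ((k : ℝ) + 2) * c ^ k)
          = C * ((k : ℝ) + 1 + 2) * c ^ (k+1) := by ring
      push_cast
      linarith
  -- summability of the slice sums
  have habs : ‖c‖ < 1 := by rw [Real.norm_eq_abs, abs_of_nonneg hc0]; exact hc1
  have hgeom : Summable fun k : ℕ => c ^ k := summable_geometric_of_lt_one hc0 hc1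
  have hsum_major : Summable fun k : ℕ => C * ((k : ℝ) + 2) * c ^ k := by
    have h1 : Summable fun k : ℕ => (k : ℝ) ^ 1 * c ^ k :=
      summable_pow_mul_geometric_of_norm_lt_one 1 habs
    have h2 := (h1.add (hgeom.mul_left 2)).mul_left C
    exact h2.congr fun k => by push_cast; ring
  have hGsum : ∀ q, Summable fun k => Gk k q := by
    intro q
    rw [← summable_nat_add_iff 1]
    exact Summable.of_nonneg_of_le (fun k => hGknn _ _) (fun k => hGkb k q)
      hsum_major
  have hWsum : ∀ q, Summable fun k => Wk k q := fun q =>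
    Summable.of_nonneg_of_le (fun k => hWknn k q) (fun k => hWkle k q) hgeom
  -- total weight is 1
  set W1 : Fin n → List A → ℝ := strWeight next w (fun _ => 1) with hW1
  set R : ℕ → Fin n → ℝ := fun k => sliceSum W1 k with hR
  have hR0 : ∀ q, R 0 q = 1 := fun q => sliceSum_zero W1 q
  have hRs : ∀ k q, R (k+1) q = ∑ a, w q a * R k (next q a) := by
    intro k q
    simp only [hR]
    rw [sliceSum_succ]
    refine Finset.sum_congr rfl fun a _ => ?_
    rw [sliceSum, Finset.mul_sum]
    exact Finset.sum_congr rfl fun v _ => rfl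
  have hRnn : ∀ k q, 0 ≤ R k q := by
    intro k
    induction k with
    | zero => intro q; rw [hR0]; norm_num
    | succ k ih =>
      intro q; rw [hRs]
      exact Finset.sum_nonneg fun a _ => mul_nonneg (hw q a) (ih _)
  have hRle : ∀ k q, R k q ≤ c ^ k := by
    intro k
    induction k with
    | zero => intro q; rw [hR0]; norm_num
    | succ k ih =>
      intro q
      rw [hRs]
      calc ∑ a, w q a * R k (next q a) ≤ ∑ a, w q a * c ^ k :=
            Finset.sum_le_sum fun a _ =>
              mul_le_mul_of_nonneg_left (ih _) (hw q a)
        _ = (∑ a, w q a) * c ^ k := by rw [Finset.sum_mul]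
        _ ≤ c * c ^ k := mul_le_mul_of_nonneg_right (hswc q) (pow_nonneg hc0 k)
        _ = c ^ (k + 1) := by ring
  have hpart : ∀ K q, ∑ k ∈ Finset.range K, Wk k q = 1 - R K q := by
    intro K
    induction K with
    | zero => intro q; simp [hR0]
    | succ K ih =>
      intro q
      rw [Finset.sum_range_succ']
      have h1 : ∑ k ∈ Finset.range K, Wk (k+1) q
          = ∑ a, w q a * (1 - R K (next q a)) := by
        rw [Finset.sum_congr rfl fun k _ => hWks k q, Finset.sum_comm]
        refine Finset.sum_congr rfl fun a _ => ?_
        rw [← Finset.mul_sum, ih (next q a)]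
      rw [h1, hWk0, hRs]
      have h2 : ∑ a, w q a * (1 - R K (next q a))
          = (∑ a, w q a) - ∑ a, w q a * R K (next q a) := by
        rw [← Finset.sum_sub_distrib]
        exact Finset.sum_congr rfl fun a _ => by ring
      rw [h2, hsw q]
      ring
  have hT : ∀ q, HasSum (fun k => Wk k q) 1 := by
    intro q
    rw [hasSum_iff_tendsto_nat_of_nonneg (fun k => hWknn k q)]
    simp only [hpart]
    have hR0' : Filter.Tendsto (fun K => R K q) Filter.atTop (nhds 0) :=
      squeeze_zero (fun K => hRnn K q) (fun K => hRle K q)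
        (tendsto_pow_atTop_nhds_zero_of_lt_one hc0 hc1)
    have := (tendsto_const_nhds (x := (1:ℝ)) (f := Filter.atTop)).sub hR0'
    simpa using this
  -- summability over all strings
  set e : List A ≃ Σ k, Fin k → A := List.equivSigmaTuple with he
  have hsig : ∀ q, Summable (fun s : Σ k, Fin k → A => g q (List.ofFn s.2)) := by
    intro q
    rw [summable_sigma_of_nonneg (fun s => hgnn q _)]
    constructor
    · intro k; exact (hasSum_fintype _).summable
    · exact (hGsum q).congr fun k => (tsum_fintype _).symm
  have hgs : ∀ q, Summable (g q) := by
    intro q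
    exact (Equiv.summable_iff e.symm).mp (hsig q)
  set H : Fin n → ℝ := fun q => ∑' y, g q y with hHdef
  have hHsig : ∀ q, H q = ∑' k, Gk k q := by
    intro q
    have h1 : ∑' s : Σ k, Fin k → A, g q (List.ofFn s.2) = ∑' y, g q y :=
      e.symm.tsum_eq (g q)
    simp only [hHdef]
    rw [← h1, Summable.tsum_sigma (hsig q)]
    exact tsum_congr fun k => by rw [tsum_fintype]; rfl
  have hHsum : ∀ q, HasSum (g q) (H q) := fun q => (hgs q).hasSum
  -- recursion for H
  have hHrec : ∀ q, H q = ξ q + ∑ a, w q a * H (next q a) := by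
    intro q
    rw [hHsig q, Summable.tsum_eq_zero_add (hGsum q)]
    have hs1 : ∀ a : A, Summable
        (fun k => -(w q a * Real.log (w q a)) * Wk k (next q a)) :=
      fun a => (hWsum _).mul_left _
    have hs2 : ∀ a : A, Summable (fun k => w q a * Gk k (next q a)) :=
      fun a => (hGsum _).mul_left _
    have h3 : ∑' k, Gk (k+1) q
        = ∑ a, (-(w q a * Real.log (w q a)) * (∑' k, Wk k (next q a))
            + w q a * (∑' k, Gk k (next q a))) := by
      rw [tsum_congr (fun k => hGks k q), Summable.tsum_finsetSum (fun a _ => (hs1 a).add (hs2 a))]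
      exact Finset.sum_congr rfl fun a _ => by
        rw [Summable.tsum_add (hs1 a) (hs2 a), tsum_mul_left, tsum_mul_left]
    rw [h3, hGk0]
    have h4 : ∀ a : A, (∑' k, Wk k (next q a)) = 1 := fun a => (hT _).tsum_eq
    have h5 : ∀ a : A, (∑' k, Gk k (next q a)) = H (next q a) :=
      fun a => (hHsig _).symm
    simp only [h4, h5, mul_one]
    rw [Finset.sum_add_distrib, hξ q, ← Finset.sum_neg_distrib]
    ring
  -- matrix form of the recursion
  have hMv : ∀ q, M.mulVec H q = ∑ a, w q a * H (next q a) := by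
    intro q
    rw [Matrix.mulVec, dotProduct]
    rw [Finset.sum_congr rfl (fun j _ => by rw [hM q j, Finset.sum_mul])]
    rw [Finset.sum_comm]
    refine Finset.sum_congr rfl fun a _ => ?_
    simp [ite_mul]
  have heq : (1 - M).mulVec H = ξ := by
    funext q
    rw [Matrix.sub_mulVec, Matrix.one_mulVec, Pi.sub_apply, hMv q]
    have := hHrec q
    linarith
  -- invertibility of 1 - M
  have hMnn : ∀ i j, 0 ≤ M i j := by
    intro i j
    rw [hM]
    refine Finset.sum_nonneg fun a _ => ?_
    split <;> [exact hw i a; exact le_refl 0]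
  have hrow : ∀ k, ∑ j, M k j = ∑ a, w k a := by
    intro k
    rw [Finset.sum_congr rfl fun j _ => hM k j, Finset.sum_comm]
    exact Finset.sum_congr rfl fun a _ => by simp [Finset.sum_ite_eq]
  have hdet : IsUnit (1 - M).det := by
    refine isUnit_iff_ne_zero.mpr (det_ne_zero_of_sum_row_lt_diag fun k => ?_)
    have hMkk : M k k ≤ ∑ j, M k j :=
      Finset.single_le_sum (fun j _ => hMnn k j) (Finset.mem_univ k)
    have h1 : M k k < 1 := by
      have := hrow k; have := hswc k; linarith
    have h2 : ∑ j ∈ Finset.univ.erase k, ‖(1 - M) k j‖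
        = ∑ j ∈ Finset.univ.erase k, M k j := by
      refine Finset.sum_congr rfl fun j hj => ?_
      have hjk : j ≠ k := (Finset.mem_erase.mp hj).1
      rw [Matrix.sub_apply, Matrix.one_apply_ne (Ne.symm hjk), zero_sub,
        norm_neg, Real.norm_eq_abs, abs_of_nonneg (hMnn k j)]
    have h3 : ∑ j ∈ Finset.univ.erase k, M k j = (∑ j, M k j) - M k k :=
      Finset.sum_erase_eq_sub (Finset.mem_univ k)
    have h4 : ‖(1 - M) k k‖ = 1 - M k k := by
      rw [Matrix.sub_apply, Matrix.one_apply_eq, Real.norm_eq_abs,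
        abs_of_nonneg (by linarith)]
    rw [h2, h3, h4, hrow k]
    have := hswc k
    linarith
  have hHval : H = (1 - M)⁻¹.mulVec ξ := by
    rw [← heq, Matrix.mulVec_mulVec, Matrix.nonsing_inv_mul _ hdet,
      Matrix.one_mulVec]
  have htarget : dotProduct (Matrix.vecMul α (1 - M)⁻¹) ξ = H q0 := by
    rw [← Matrix.dotProduct_mulVec, ← hHval, hα, single_dotProduct,
      one_mul]
  rw [htarget]
  -- reduce the sum over pairs to the sum over strings from q0
  have hinj : Function.Injective (fun y : List A => ((q0, y) : Fin n × List A)) :=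
    fun y1 y2 h => by simpa using h
  refine (Function.Injective.hasSum_iff hinj ?_).mp ?_
  · intro x hx
    have hx1 : x.1 ≠ q0 := by
      intro h
      exact hx ⟨x.2, by simp [Prod.ext_iff, h.symm]⟩
    rw [hα]
    simp [Pi.single_eq_of_ne hx1]
  · convert hHsum q0 using 2 with y
    funext y
    simp [hα, Pi.single_eq_same, hg, Function.comp]
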